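/- For a set S of non-pointed matrices (S ⊆ matr), the following are equivalent: (i) every finitely complete category has S-closed relations; (ii) the category of sets has S-closed relations; (iii) for every matrix M ∈ S, the right column of M equals one of its left columns. -/

import Mathlib

open CategoryTheory CategoryTheory.Limits

universe w v u

/-- A (non-pointed) extended matrix `M ∈ matr(n,m,k)`: `n > 0` rows, `m` left
columns and one right column, with entries in `{x₁, …, x_k}` (modelled as
`Fin k`). `matr` is the union over all `n,m,k`, i.e. the type `Matr`. -/
structure Matr where
  n : ℕ
  m : ℕ
  k : ℕ
  npos : 0 < n
  left : Fin n → Fin m → Fin k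
  right : Fin n → Fin k

namespace Matr

variable {C : Type u} [Category.{v} C]

/-- A relation `r : R ⟶ P`, where `pr` exhibits `P` as the `n`-fold product
`Xⁿ`, is `M`-closed: for every object `Z` and every interpretation
`f : {x₁,…,x_k} → C(Z,X)` of the entries of `M`, if for every left column `j`
the induced morphism `Z ⟶ Xⁿ` factors through `r`, then so does the morphism
induced by the right column. -/
def IsClosed (M : Matr) {X P R : C} (pr : Fin M.n → (P ⟶ X))
    (hP : IsLimit (Fan.mk P pr)) (r : R ⟶ P) : Prop :=
  ∀ (Z : C) (f : Fin M.k → (Z ⟶ X)),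
    (∀ j : Fin M.m, ∃ g : Z ⟶ R,
        g ≫ r = hP.lift (Fan.mk Z (fun i => f (M.left i j)))) →
    ∃ g : Z ⟶ R, g ≫ r = hP.lift (Fan.mk Z (fun i => f (M.right i)))

/-- A relation `r : R ⟶ P`, where `pr` exhibits `P` as the product
`X₁ × ⋯ × X_n` of a family `X : Fin n → C`, is strictly `M`-closed: for every
object `Z` and every row-wise interpretation `fᵢ : {x₁,…,x_k} → C(Z,Xᵢ)`, if
every left column's induced morphism `Z ⟶ X₁ × ⋯ × X_n` factors through `r`,
then so does the right column's induced morphism. -/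
def IsStrictClosed (M : Matr) {X : Fin M.n → C} {P R : C}
    (pr : ∀ i, P ⟶ X i) (hP : IsLimit (Fan.mk P pr)) (r : R ⟶ P) : Prop :=
  ∀ (Z : C) (f : ∀ i, Fin M.k → (Z ⟶ X i)),
    (∀ j : Fin M.m, ∃ g : Z ⟶ R,
        g ≫ r = hP.lift (Fan.mk Z (fun i => f i (M.left i j)))) →
    ∃ g : Z ⟶ R, g ≫ r = hP.lift (Fan.mk Z (fun i => f i (M.right i)))

/-- `C` has `M`-closed `W`-relations: every `n`-ary relation `r : R ⟶ Xⁿ`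
belonging to the class of monomorphisms `W` is `M`-closed. -/
def HasClosedRels (M : Matr) (C : Type u) [Category.{v} C]
    (W : MorphismProperty C) : Prop :=
  ∀ (X P R : C) (pr : Fin M.n → (P ⟶ X)) (hP : IsLimit (Fan.mk P pr))
    (r : R ⟶ P), W r → M.IsClosed pr hP r

/-- `C` has `S`-closed `W`-relations. -/
def HasSClosedRels (S : Set Matr) (C : Type u) [Category.{v} C]
    (W : MorphismProperty C) : Prop :=
  ∀ M ∈ S, HasClosedRels M C W

end Matr

/-- The class of strong monomorphisms of `C`, as a `MorphismProperty`. -/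
def strongMonos (C : Type u) [Category.{v} C] : MorphismProperty C :=
  fun _ _ f => StrongMono f

section Aux

/-- If the right column of `M` is one of its left columns, then every relation in every
category is `M`-closed. -/
theorem aux_isClosed_of_col {C : Type u} [Category.{v} C] (M : Matr)
    (h : ∃ j : Fin M.m, ∀ i, M.right i = M.left i j)
    {X P R : C} (pr : Fin M.n → (P ⟶ X)) (hP : IsLimit (Fan.mk P pr))
    (r : R ⟶ P) : M.IsClosed pr hP r := by
  obtain ⟨j, hj⟩ := h
  intro Z f hf
  obtain ⟨g, hg⟩ := hf j
  refine ⟨g, hg.trans ?_⟩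
  have : (fun i => f (M.left i j)) = fun i => f (M.right i) := by
    funext i; rw [hj i]
  rw [this]

/-- Counterexample in the category of sets. -/
theorem aux_type (S : Set Matr)
    (hB : Matr.HasSClosedRels S (Type w) (MorphismProperty.monomorphisms (Type w))) :
    ∀ M ∈ S, ∃ j : Fin M.m, ∀ i, M.right i = M.left i j := by
  intro M hM
  let X : Type w := ULift.{w} (Fin M.k)
  let P : Type w := Fin M.n → X
  let pr : Fin M.n → (P ⟶ X) := fun i => TypeCat.ofHom (fun p => p i)
  let hP : IsLimit (Fan.mk P pr) :=
    mkFanLimit _ (fun s => TypeCat.ofHom (fun z i => s.proj i z)) (fun s i => rfl)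
      (fun s g hg => ConcreteCategory.hom_ext _ _ fun z => funext fun i =>
        ConcreteCategory.congr_hom (hg i) z)
  let R : Type w := {p : P // ∃ j : Fin M.m, p = fun i => ULift.up (M.left i j)}
  let r : R ⟶ P := TypeCat.ofHom Subtype.val
  have hmono : MorphismProperty.monomorphisms (Type w) r := by
    show Mono r
    exact (CategoryTheory.mono_iff_injective r).mpr Subtype.val_injective
  obtain ⟨g, hg⟩ := hB M hM X P R pr hP r hmono PUnit
    (fun c => TypeCat.ofHom (fun _ => ULift.up c))
    (fun j => ⟨TypeCat.ofHom fun _ => ⟨fun i => ULift.up (M.left i j), j, rfl⟩, rfl⟩)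
  obtain ⟨j, hj⟩ := (g PUnit.unit).2
  have h1 : (g PUnit.unit).1 = fun i => ULift.up (M.right i) := by
    have := ConcreteCategory.congr_hom hg PUnit.unit; exact this
  refine ⟨j, fun i => ?_⟩
  have := congrFun (h1.symm.trans hj) i
  exact congrArg ULift.down this

attribute [local instance] uliftCategory

/-- The category of finite sets with objects in `Type u` and morphisms in `Type v`. -/
abbrev DCat := ULiftHom.{v} (ULift.{u} FintypeCat.Skeleton.{0})

/-- `DCat` is equivalent to the category of finite sets. -/
noncomputable def DEquiv : DCat.{v, u} ≌ FintypeCat.{0} :=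
  (ULiftHom.equiv.symm).trans ((ULift.equivalence.symm).trans FintypeCat.Skeleton.equivalence)

noncomputable instance : HasFiniteLimits DCat.{v, u} := by
  constructor
  intro J _ _
  have : HasLimitsOfShape J FintypeCat.{0} := HasFiniteLimits.out J
  exact Adjunction.hasLimitsOfShape_of_equivalence DEquiv.{v, u}.functor

/-- The object of `DCat` corresponding to a natural number. -/
def dobj (a : ℕ) : DCat.{v, u} := ULiftHom.objUp (ULift.up (FintypeCat.Skeleton.mk a))

/-- The morphism of `DCat` corresponding to a function. -/
def dhom {a b : ℕ} (f : Fin a → Fin b) : dobj.{v, u} a ⟶ dobj.{v, u} b :=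
  ULift.up (fun x => ULift.up (f x.down))

/-- Counterexample in `DCat`. -/
theorem aux_gen (S : Set Matr)
    (hA : ∀ (C : Type u) [Category.{v} C] [HasFiniteLimits C],
        Matr.HasSClosedRels S C (MorphismProperty.monomorphisms C)) :
    ∀ M ∈ S, ∃ j : Fin M.m, ∀ i, M.right i = M.left i j := by
  classical
  intro M hM
  let N : ℕ := Fintype.card (Fin M.n → Fin M.k)
  let e : (Fin M.n → Fin M.k) ≃ Fin N := Fintype.equivFin _
  let X : DCat.{v, u} := dobj M.k
  let P : DCat.{v, u} := dobj N
  let pr : Fin M.n → (P ⟶ X) := fun i => dhom (fun p => e.symm p i)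
  let hP : IsLimit (Fan.mk P pr) :=
    mkFanLimit _
      (fun s => ULift.up (fun z => ULift.up (e (fun i => ((s.proj i).down z).down))))
      (fun s i => ULift.ext _ _ (funext fun z => by
        show ULift.up (e.symm (e fun i' => ((s.proj i').down z).down) i) = (s.proj i).down z
        erw [Equiv.symm_apply_apply]
        rfl))
      (fun s g hg => ULift.ext _ _ (funext fun z => ULift.ext _ _ (by
        show (g.down z).down = e (fun i => ((s.proj i).down z).down)
        have h1 : (fun i => ((s.proj i).down z).down) = e.symm ((g.down z).down) := by
          funext i
          exact (congrArg ULift.down (congrFun (congrArg ULift.down (hg i)) z)).symm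
        erw [h1, Equiv.apply_symm_apply])))
  let t : Finset (Fin N) := Finset.image (fun j => e (fun i => M.left i j)) Finset.univ
  let emb : Fin t.card → Fin N := fun x => ((t.orderIsoOfFin rfl) x : Fin N)
  have hembInj : Function.Injective emb := fun a b hab => by
    exact (t.orderIsoOfFin rfl).injective (Subtype.val_injective hab)
  have hembMem : ∀ x, emb x ∈ t := fun x => ((t.orderIsoOfFin rfl) x).2
  let R : DCat.{v, u} := dobj t.card
  let r : R ⟶ P := dhom emb
  have hmono : MorphismProperty.monomorphisms DCat.{v, u} r := by
    show Mono r
    constructor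
    intro Z a b hab
    refine ULift.ext _ _ (funext fun z => ULift.ext _ _ ?_)
    have := congrArg ULift.down (congrFun (congrArg ULift.down hab) z)
    exact hembInj this
  let Z : DCat.{v, u} := dobj 1
  let z₀ : ULift.{0, 0} (Fin 1) := ULift.up 0
  let f : Fin M.k → (Z ⟶ X) := fun c => dhom (fun _ => c)
  obtain ⟨g, hg⟩ := hA DCat.{v, u} M hM X P R pr hP r hmono Z f (fun j => by
    have hx : e (fun i => M.left i j) ∈ t :=
      Finset.mem_image_of_mem _ (Finset.mem_univ j)
    refine ⟨dhom (fun _ => (t.orderIsoOfFin rfl).symm ⟨e (fun i => M.left i j), hx⟩), ?_⟩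
    refine ULift.ext _ _ (funext fun z => ULift.ext _ _ ?_)
    show emb ((t.orderIsoOfFin rfl).symm ⟨e (fun i => M.left i j), hx⟩)
        = e (fun i => M.left i j)
    exact congrArg Subtype.val ((t.orderIsoOfFin rfl).apply_symm_apply _))
  have h : emb ((g.down z₀).down) = e (fun i => M.right i) :=
    congrArg ULift.down (congrFun (congrArg ULift.down hg) z₀)
  have hmem : e (fun i => M.right i) ∈ t := h ▸ hembMem _
  obtain ⟨j, _, hj⟩ := Finset.mem_image.mp hmem
  refine ⟨j, fun i => ?_⟩
  exact (congrFun (e.injective hj) i).symm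

end Aux

/-- For a set `S` of non-pointed matrices, the following are
equivalent: (i) every finitely complete category has `S`-closed relations;
(ii) the category of sets has `S`-closed relations; (iii) for every `M ∈ S`,
the right column of `M` equals one of its left columns. -/
theorem antiTrivial_characterization (S : Set Matr) :
    ((∀ (C : Type u) [Category.{v} C] [HasFiniteLimits C],
        Matr.HasSClosedRels S C (MorphismProperty.monomorphisms C)) ↔
      Matr.HasSClosedRels S (Type w)
        (MorphismProperty.monomorphisms (Type w))) ∧
    ((∀ (C : Type u) [Category.{v} C] [HasFiniteLimits C],
        Matr.HasSClosedRels S C (MorphismProperty.monomorphisms C)) ↔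
      ∀ M ∈ S, ∃ j : Fin M.m, ∀ i, M.right i = M.left i j) := by
  have hCA : (∀ M ∈ S, ∃ j : Fin M.m, ∀ i, M.right i = M.left i j) →
      ∀ (C : Type u) [Category.{v} C] [HasFiniteLimits C],
        Matr.HasSClosedRels S C (MorphismProperty.monomorphisms C) := by
    intro h C _ _ M hM X P R pr hP r _
    exact aux_isClosed_of_col M (h M hM) pr hP r
  have hCB : (∀ M ∈ S, ∃ j : Fin M.m, ∀ i, M.right i = M.left i j) →
      Matr.HasSClosedRels S (Type w) (MorphismProperty.monomorphisms (Type w)) := by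
    intro h M hM X P R pr hP r _
    exact aux_isClosed_of_col M (h M hM) pr hP r
  exact ⟨⟨fun hA => hCB (aux_gen S hA), fun hB => hCA (aux_type S hB)⟩,
    ⟨aux_gen S, hCA⟩⟩
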